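/- arXiv:1302.7141 — 7 statements merged into one kernel-verified Lean document; each statement's English description precedes it below -/
import Mathlib

section
/- Let ν > 0 and δ ≥ 0, and let G be a bipartite graph with |L(G)| = m. Let ℒ be the set of maximal stable sets A of G with |A ∩ L(G)| ≥ (1/2 + δ)·m, and let 𝒮 be the set of maximal stable sets B with |B ∩ L(G)| ≤ (1 − ν)·m/2. If |𝒮| ≥ (1/ν)·|ℒ|, then the sum over all maximal stable sets A of |A ∩ L(G)|, divided by the total number of maximal stable sets, is at most (1/2 + δ)·m. -/
open Finset
open scoped Classical

variable {V : Type*}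

/-- `S` is a maximal stable (independent) set of `G`: no two vertices of `S` are adjacent and
every vertex outside `S` has a neighbour in `S`. -/
def IsMaxStable [Fintype V] [DecidableEq V] (G : SimpleGraph V) (S : Finset V) : Prop :=
  (∀ u ∈ S, ∀ v ∈ S, ¬ G.Adj u v) ∧ ∀ v, v ∉ S → ∃ u ∈ S, G.Adj v u

/-- The collection 𝒜(G) of maximal stable sets of `G`. -/
noncomputable def mstab [Fintype V] [DecidableEq V] (G : SimpleGraph V) : Finset (Finset V) :=
  Finset.univ.filter (fun S => IsMaxStable G S)

/-- `(L, R)` is a bipartition of `G`. -/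
def IsBip [DecidableEq V] (G : SimpleGraph V) (L R : Finset V) : Prop :=
  Disjoint L R ∧ (∀ x : V, x ∈ L ∪ R) ∧
    ∀ ⦃u v⦄, G.Adj u v → (u ∈ L ∧ v ∈ R) ∨ (u ∈ R ∧ v ∈ L)

theorem stmt_1 [Fintype V] [DecidableEq V] (G : SimpleGraph V) (L R : Finset V)
    (hbip : IsBip G L R) (ν δ : ℝ) (hν : 0 < ν) (hδ : 0 ≤ δ) (m : ℕ) (hm : L.card = m)
    (h : (1/ν) * (((mstab G).filter
          (fun A => (1/2 + δ) * (m : ℝ) ≤ ((A ∩ L).card : ℝ))).card : ℝ)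
        ≤ (((mstab G).filter
          (fun B => ((B ∩ L).card : ℝ) ≤ (1 - ν) * (m : ℝ) / 2)).card : ℝ)) :
    (∑ A ∈ mstab G, ((A ∩ L).card : ℝ)) / ((mstab G).card : ℝ) ≤ (1/2 + δ) * m := by
  classical
  have hub : ∀ A : Finset V, ((A ∩ L).card : ℝ) ≤ m := by
    intro A
    have h1 : (A ∩ L).card ≤ L.card := Finset.card_le_card Finset.inter_subset_right
    rw [hm] at h1
    exact_mod_cast h1
  have hnn : ∀ A : Finset V, (0:ℝ) ≤ ((A ∩ L).card : ℝ) := fun A => Nat.cast_nonneg _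
  rcases Nat.eq_zero_or_pos m with hm0 | hmpos
  · have hz : ∀ A ∈ mstab G, ((A ∩ L).card : ℝ) = 0 := by
      intro A _
      have h1 := hub A
      rw [hm0, Nat.cast_zero] at h1
      linarith [hnn A]
    rw [Finset.sum_congr rfl hz]
    simp [hm0]
  rcases eq_or_ne ((mstab G).card) 0 with hc0 | hc0
  · rw [Finset.card_eq_zero] at hc0
    rw [hc0]
    simp only [Finset.sum_empty, Finset.card_empty, Nat.cast_zero, div_zero]
    positivity
  have hcpos : (0:ℝ) < ((mstab G).card : ℝ) :=
    Nat.cast_pos.mpr (Nat.pos_of_ne_zero hc0)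
  have hmR : (0:ℝ) < (m:ℝ) := Nat.cast_pos.mpr hmpos
  rw [div_le_iff₀ hcpos]
  set p : Finset V → Prop := fun A => (1/2 + δ) * (m : ℝ) ≤ ((A ∩ L).card : ℝ) with hp
  set LL := (mstab G).filter p with hLL
  set NN := (mstab G).filter (fun A => ¬ p A) with hNN
  set SS := (mstab G).filter (fun B => ((B ∩ L).card : ℝ) ≤ (1 - ν) * (m : ℝ) / 2) with hSS
  have hSsub : SS ⊆ NN := by
    intro B hB
    rw [hSS, Finset.mem_filter] at hB
    rw [hNN, Finset.mem_filter]
    refine ⟨hB.1, ?_⟩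
    rw [hp]
    simp only [not_le]
    nlinarith [hB.2, hν, hδ, hmR]
  have hsplit : (∑ A ∈ LL, ((A ∩ L).card : ℝ)) + (∑ A ∈ NN, ((A ∩ L).card : ℝ))
      = ∑ A ∈ mstab G, ((A ∩ L).card : ℝ) :=
    Finset.sum_filter_add_sum_filter_not _ _ _
  have hsplit2 : (∑ A ∈ NN \ SS, ((A ∩ L).card : ℝ)) + (∑ A ∈ SS, ((A ∩ L).card : ℝ))
      = ∑ A ∈ NN, ((A ∩ L).card : ℝ) := Finset.sum_sdiff hSsub
  have h1 : (∑ A ∈ LL, ((A ∩ L).card : ℝ)) ≤ (LL.card : ℝ) * (m : ℝ) := by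
    calc (∑ A ∈ LL, ((A ∩ L).card : ℝ)) ≤ ∑ A ∈ LL, (m : ℝ) :=
          Finset.sum_le_sum (fun A _ => hub A)
      _ = (LL.card : ℝ) * (m : ℝ) := by rw [Finset.sum_const, nsmul_eq_mul]
  have h2 : (∑ A ∈ SS, ((A ∩ L).card : ℝ)) ≤ (SS.card : ℝ) * ((1 - ν) * (m : ℝ) / 2) := by
    calc (∑ A ∈ SS, ((A ∩ L).card : ℝ)) ≤ ∑ A ∈ SS, ((1 - ν) * (m : ℝ) / 2) := by
          refine Finset.sum_le_sum (fun A hA => ?_)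
          rw [hSS, Finset.mem_filter] at hA
          exact hA.2
      _ = (SS.card : ℝ) * ((1 - ν) * (m : ℝ) / 2) := by rw [Finset.sum_const, nsmul_eq_mul]
  have h3 : (∑ A ∈ NN \ SS, ((A ∩ L).card : ℝ)) ≤ ((NN \ SS).card : ℝ) * ((1/2 + δ) * (m : ℝ)) := by
    calc (∑ A ∈ NN \ SS, ((A ∩ L).card : ℝ)) ≤ ∑ A ∈ NN \ SS, ((1/2 + δ) * (m : ℝ)) := by
          refine Finset.sum_le_sum (fun A hA => ?_)
          have hA' := (Finset.mem_sdiff.mp hA).1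
          rw [hNN, Finset.mem_filter] at hA'
          have hA2 : ¬ (1/2 + δ) * (m:ℝ) ≤ ((A ∩ L).card : ℝ) := hA'.2
          exact (not_le.mp hA2).le
      _ = ((NN \ SS).card : ℝ) * ((1/2 + δ) * (m : ℝ)) := by rw [Finset.sum_const, nsmul_eq_mul]
  have hcardsd : ((NN \ SS).card : ℝ) = (NN.card : ℝ) - (SS.card : ℝ) := by
    rw [Finset.card_sdiff_of_subset hSsub]
    exact_mod_cast Nat.cast_sub (Finset.card_le_card hSsub)
  have hcard : ((mstab G).card : ℝ) = (LL.card : ℝ) + (NN.card : ℝ) := by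
    rw [hLL, hNN]
    exact_mod_cast (Finset.card_filter_add_card_filter_not (s := mstab G) p).symm
  have hSle : (SS.card : ℝ) ≤ (NN.card : ℝ) := by
    exact_mod_cast Finset.card_le_card hSsub
  have ha : (LL.card : ℝ) ≤ ν * (SS.card : ℝ) := by
    have h' : (LL.card : ℝ) / ν ≤ (SS.card : ℝ) := by
      rw [div_eq_inv_mul, ← one_div]
      exact h
    rw [div_le_iff₀ hν] at h'
    linarith
  rw [hcardsd] at h3
  rw [hcard]
  have hLLnn : (0:ℝ) ≤ (LL.card : ℝ) := Nat.cast_nonneg _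
  have hSSnn : (0:ℝ) ≤ (SS.card : ℝ) := Nat.cast_nonneg _
  have hNNnn : (0:ℝ) ≤ (NN.card : ℝ) := Nat.cast_nonneg _
  nlinarith [mul_nonneg (mul_nonneg hSSnn hmR.le) hδ,
    mul_nonneg (mul_nonneg hLLnn hmR.le) hδ,
    mul_le_mul_of_nonneg_right ha hmR.le]
end

section
/- In a bipartite graph G with at least one edge, if a vertex v ∈ L(G) is adjacent to every vertex of R(G), then the only maximal stable set containing v is L(G) itself; moreover G has at least two maximal stable sets, so v lies in at most half of the maximal stable sets of G. -/
open Finset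
open scoped Classical

variable {V : Type*}

theorem stmt_2 [Fintype V] [DecidableEq V] (G : SimpleGraph V) (L R : Finset V)
    (hbip : IsBip G L R) (hR : R.Nonempty) (v : V) (hv : v ∈ L)
    (hadj : ∀ w ∈ R, G.Adj v w) :
    (∀ S ∈ mstab G, v ∈ S → S = L) ∧ 2 ≤ (mstab G).card ∧
      2 * ((mstab G).filter (fun S => v ∈ S)).card ≤ (mstab G).card := by
  obtain ⟨hdisj, hcover, hedge⟩ := hbip
  have hLR : ∀ {x : V}, x ∈ L → x ∉ R := fun hx => Finset.disjoint_left.mp hdisj hx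
  -- any maximal stable set containing v equals L
  have key : ∀ S ∈ mstab G, v ∈ S → S = L := by
    intro S hS hvS
    simp only [mstab, Finset.mem_filter] at hS
    obtain ⟨-, hstab, hmax⟩ := hS
    have hSL : ∀ x ∈ S, x ∈ L := by
      intro x hx
      rcases Finset.mem_union.mp (hcover x) with h | h
      · exact h
      · exact absurd (hadj x h) (hstab v hvS x hx)
    apply Finset.Subset.antisymm (fun x hx => hSL x hx)
    intro x hx
    by_contra hxS
    obtain ⟨u, huS, hadjxu⟩ := hmax x hxS
    rcases hedge hadjxu with ⟨_, huR⟩ | ⟨hxR, _⟩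
    · exact hLR (hSL u huS) huR
    · exact hLR hx hxR
  -- L is a maximal stable set
  have hLmem : L ∈ mstab G := by
    simp only [mstab, Finset.mem_filter, Finset.mem_univ, true_and]
    constructor
    · intro a ha b hb hab
      rcases hedge hab with ⟨_, hbR⟩ | ⟨haR, _⟩
      · exact hLR hb hbR
      · exact hLR ha haR
    · intro u hu
      have huR : u ∈ R := by
        rcases Finset.mem_union.mp (hcover u) with h | h
        · exact absurd h hu
        · exact h
      exact ⟨v, hv, (hadj u huR).symm⟩
  -- the other maximal stable set
  set S₀ : Finset V := R ∪ L.filter (fun u => ∀ x, ¬ G.Adj u x) with hS₀def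
  have hS₀mem : S₀ ∈ mstab G := by
    simp only [mstab, Finset.mem_filter, Finset.mem_univ, true_and]
    constructor
    · intro a ha b hb hab
      rcases hedge hab with ⟨haL, hbR⟩ | ⟨haR, hbL⟩
      · rcases Finset.mem_union.mp ha with h | h
        · exact hLR haL h
        · exact (Finset.mem_filter.mp h).2 b hab
      · rcases Finset.mem_union.mp hb with h | h
        · exact hLR hbL h
        · exact (Finset.mem_filter.mp h).2 a hab.symm
    · intro u hu
      have huR : u ∉ R := fun h => hu (Finset.mem_union_left _ h)
      have huL : u ∈ L := by
        rcases Finset.mem_union.mp (hcover u) with h | h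
        · exact h
        · exact absurd h huR
      have : ¬ (∀ x, ¬ G.Adj u x) := fun h =>
        hu (Finset.mem_union_right _ (Finset.mem_filter.mpr ⟨huL, h⟩))
      push_neg at this
      obtain ⟨x, hx⟩ := this
      rcases hedge hx with ⟨_, hxR⟩ | ⟨huR', _⟩
      · exact ⟨x, Finset.mem_union_left _ hxR, hx⟩
      · exact absurd huR' huR
  have hvS₀ : v ∉ S₀ := by
    intro h
    rcases Finset.mem_union.mp h with h | h
    · exact hLR hv h
    · obtain ⟨w, hw⟩ := hR
      exact (Finset.mem_filter.mp h).2 w (hadj w hw)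
  have hne : L ≠ S₀ := fun h => hvS₀ (h ▸ hv)
  have hcard : 2 ≤ (mstab G).card :=
    Finset.one_lt_card.mpr ⟨L, hLmem, S₀, hS₀mem, hne⟩
  refine ⟨key, hcard, ?_⟩
  have hfilter : (mstab G).filter (fun S => v ∈ S) = {L} := by
    ext S
    simp only [Finset.mem_filter, Finset.mem_singleton]
    constructor
    · rintro ⟨hS, hvS⟩; exact key S hS hvS
    · rintro rfl; exact ⟨hLmem, hv⟩
  rw [hfilter, Finset.card_singleton]
  omega
end

section
/- Let G ∈ ℬ(m,n;p) be a random bipartite graph with edge probability p ∈ (0,1), q = 1 − p. Let S ⊆ V(G) with |S ∩ L(G)| = ℓ and |S ∩ R(G)| = r. Then the probability that S is a maximal stable set of G equals q^{ℓr} · (1 − q^r)^{m−ℓ} · (1 − q^ℓ)^{n−r}. -/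
open Finset
open scoped Classical

/-- Weight (probability) of an outcome `g` of the random bipartite graph `ℬ(m,n;p)` with left
side `Fin m` and right side `Fin n`: each potential edge is present independently with
probability `p`. -/
noncomputable def bipWeight (m n : ℕ) (p : ℝ) (g : Fin m × Fin n → Bool) : ℝ :=
  ∏ e : Fin m × Fin n, if g e then p else 1 - p

/-- Probability of an event `E` in the random bipartite graph `ℬ(m,n;p)`. -/
noncomputable def bipProb (m n : ℕ) (p : ℝ) (E : (Fin m × Fin n → Bool) → Prop) : ℝ :=
  ∑ g : Fin m × Fin n → Bool, if E g then bipWeight m n p g else 0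

/-- The vertex set `A ∪ B` is a maximal stable set of the bipartite graph with edge
indicator `g`: there is no edge between `A` and `B`, every left vertex outside `A` has a
neighbour in `B`, and every right vertex outside `B` has a neighbour in `A`. -/
def IsMaxStableEvent {m n : ℕ} (A : Finset (Fin m)) (B : Finset (Fin n))
    (g : Fin m × Fin n → Bool) : Prop :=
  (∀ a ∈ A, ∀ b ∈ B, ¬ g (a, b) = true) ∧
  (∀ a, a ∉ A → ∃ b ∈ B, g (a, b) = true) ∧
  (∀ b, b ∉ B → ∃ a ∈ A, g (a, b) = true)

private lemma sum_prod_pi {α β : Type*} [Fintype α] [DecidableEq α] [Fintype β] (f : α → β → ℝ) :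
    ∑ k : α → β, ∏ x, f x (k x) = ∏ x, ∑ y, f x y := by
  rw [Finset.prod_univ_sum]
  rfl

private lemma sum_split2 {ι α β : Type*} [Fintype ι] [Fintype α] [Fintype β]
    [DecidableEq ι] [DecidableEq α] [DecidableEq β]
    (e : ι ≃ α ⊕ β) (F : (α → Bool) → ℝ) (G : (β → Bool) → ℝ) :
    ∑ g : ι → Bool, F (fun a => g (e.symm (Sum.inl a))) * G (fun b => g (e.symm (Sum.inr b)))
      = (∑ f : α → Bool, F f) * (∑ f : β → Bool, G f) := by
  classical
  have h := Fintype.sum_equiv ((Equiv.arrowCongr e (Equiv.refl Bool)).trans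
      (Equiv.sumArrowEquivProdArrow α β Bool))
    (fun g : ι → Bool => F (fun a => g (e.symm (Sum.inl a))) * G (fun b => g (e.symm (Sum.inr b))))
    (fun x : (α → Bool) × (β → Bool) => F x.1 * G x.2)
    (fun g => by rfl)
  rw [h, Fintype.sum_prod_type, ← Finset.sum_mul_sum]

private lemma sum_split4 {ι α β γ δ : Type*} [Fintype ι] [Fintype α] [Fintype β] [Fintype γ]
    [Fintype δ] [DecidableEq ι] [DecidableEq α] [DecidableEq β] [DecidableEq γ] [DecidableEq δ]
    (e : ι ≃ (α ⊕ β) ⊕ (γ ⊕ δ)) (F : (α → Bool) → ℝ) (G : (β → Bool) → ℝ)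
    (H : (γ → Bool) → ℝ) (K : (δ → Bool) → ℝ) :
    ∑ g : ι → Bool,
        F (fun a => g (e.symm (Sum.inl (Sum.inl a)))) *
        G (fun b => g (e.symm (Sum.inl (Sum.inr b)))) *
        H (fun c => g (e.symm (Sum.inr (Sum.inl c)))) *
        K (fun d => g (e.symm (Sum.inr (Sum.inr d))))
      = (∑ f : α → Bool, F f) * (∑ f : β → Bool, G f) *
        (∑ f : γ → Bool, H f) * (∑ f : δ → Bool, K f) := by
  classical
  have h2 := sum_split2 e
      (fun h : (α ⊕ β) → Bool => F (fun a => h (Sum.inl a)) * G (fun b => h (Sum.inr b)))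
      (fun h : (γ ⊕ δ) → Bool => H (fun c => h (Sum.inl c)) * K (fun d => h (Sum.inr d)))
  have hFG := sum_split2 (Equiv.refl (α ⊕ β)) F G
  have hHK := sum_split2 (Equiv.refl (γ ⊕ δ)) H K
  simp only [Equiv.refl_symm, Equiv.refl_apply] at hFG hHK
  calc ∑ g : ι → Bool,
        F (fun a => g (e.symm (Sum.inl (Sum.inl a)))) *
        G (fun b => g (e.symm (Sum.inl (Sum.inr b)))) *
        H (fun c => g (e.symm (Sum.inr (Sum.inl c)))) *
        K (fun d => g (e.symm (Sum.inr (Sum.inr d))))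
      = ∑ g : ι → Bool,
        (F (fun a => g (e.symm (Sum.inl (Sum.inl a)))) *
          G (fun b => g (e.symm (Sum.inl (Sum.inr b))))) *
        (H (fun c => g (e.symm (Sum.inr (Sum.inl c)))) *
          K (fun d => g (e.symm (Sum.inr (Sum.inr d))))) := by
        apply Finset.sum_congr rfl; intros; ring
    _ = (∑ h : (α ⊕ β) → Bool, F (fun a => h (Sum.inl a)) * G (fun b => h (Sum.inr b))) *
        (∑ h : (γ ⊕ δ) → Bool, H (fun c => h (Sum.inl c)) * K (fun d => h (Sum.inr d))) := h2
    _ = (∑ f : α → Bool, F f) * (∑ f : β → Bool, G f) *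
        ((∑ f : γ → Bool, H f) * (∑ f : δ → Bool, K f)) := by rw [hFG, hHK]
    _ = _ := by ring

private lemma sum_exists_aux {α : Type*} [Fintype α] [DecidableEq α] (p : ℝ) :
    ∑ h : α → Bool, (if (∃ a, h a = true) then ∏ a, (if h a then p else 1 - p) else 0)
      = 1 - (1 - p) ^ Fintype.card α := by
  have key : ∀ h : α → Bool,
      (if (∃ a, h a = true) then ∏ a, (if h a then p else 1 - p) else 0)
        = (∏ a, (if h a then p else 1 - p))
          - (if h = (fun _ => false) then (1 - p) ^ Fintype.card α else 0) := by
    intro h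
    by_cases hex : ∃ a, h a = true
    · obtain ⟨a, ha⟩ := hex
      rw [if_pos ⟨a, ha⟩, if_neg, sub_zero]
      intro hc; rw [hc] at ha; simp at ha
    · have hf : h = fun _ => false := by
        funext a
        by_contra hc
        exact hex ⟨a, by simpa using hc⟩
      rw [if_neg hex, if_pos hf, hf]
      simp
  rw [Finset.sum_congr rfl (fun h _ => key h), Finset.sum_sub_distrib]
  rw [sum_prod_pi (f := fun (_ : α) (t : Bool) => if t then p else 1 - p)]
  simp [Fintype.sum_bool, Finset.sum_ite_eq']

private def blockEquiv {m n : ℕ} (A : Finset (Fin m)) (B : Finset (Fin n)) :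
    Fin m × Fin n ≃ ({x // x ∈ A} × {y // y ∈ B} ⊕ {x // x ∈ A} × {y // ¬ y ∈ B}) ⊕
      ({x // ¬ x ∈ A} × {y // y ∈ B} ⊕ {x // ¬ x ∈ A} × {y // ¬ y ∈ B}) :=
  (Equiv.prodCongr (Equiv.sumCompl (· ∈ A)).symm (Equiv.sumCompl (· ∈ B)).symm).trans
    ((Equiv.sumProdDistrib _ _ _).trans
      (Equiv.sumCongr (Equiv.prodSumDistrib _ _ _) (Equiv.prodSumDistrib _ _ _)))

theorem stmt_3 (m n ℓ r : ℕ) (p q : ℝ) (hp0 : 0 < p) (hp1 : p < 1) (hq : q = 1 - p)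
    (A : Finset (Fin m)) (B : Finset (Fin n)) (hA : A.card = ℓ) (hB : B.card = r) :
    bipProb m n p (fun g => IsMaxStableEvent A B g)
      = q ^ (ℓ * r) * (1 - q ^ r) ^ (m - ℓ) * (1 - q ^ ℓ) ^ (n - r) := by
  classical
  subst hq
  -- cardinalities
  have hcSA : Fintype.card {x // x ∈ A} = ℓ := by simp [hA]
  have hcSAc : Fintype.card {x // ¬ x ∈ A} = m - ℓ := by simp [hA]
  have hcSB : Fintype.card {y // y ∈ B} = r := by simp [hB]
  have hcSBc : Fintype.card {y // ¬ y ∈ B} = n - r := by simp [hB]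
  set E := blockEquiv A B with hE
  have hE1 : ∀ x : {x // x ∈ A} × {y // y ∈ B},
      E.symm (Sum.inl (Sum.inl x)) = (x.1.1, x.2.1) := fun _ => rfl
  have hE2 : ∀ x : {x // x ∈ A} × {y // ¬ y ∈ B},
      E.symm (Sum.inl (Sum.inr x)) = (x.1.1, x.2.1) := fun _ => rfl
  have hE3 : ∀ x : {x // ¬ x ∈ A} × {y // y ∈ B},
      E.symm (Sum.inr (Sum.inl x)) = (x.1.1, x.2.1) := fun _ => rfl
  -- the local weight function
  set w : Bool → ℝ := fun t => if t then p else 1 - p with hw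
  -- the four block functionals
  set F1 : ({x // x ∈ A} × {y // y ∈ B} → Bool) → ℝ :=
    fun k => ∏ x, (if k x then 0 else 1 - p) with hF1
  set F2 : ({x // x ∈ A} × {y // ¬ y ∈ B} → Bool) → ℝ :=
    fun k => ∏ y : {y // ¬ y ∈ B},
      (if (∃ a : {x // x ∈ A}, k (a, y) = true) then ∏ a, w (k (a, y)) else 0) with hF2
  set F3 : ({x // ¬ x ∈ A} × {y // y ∈ B} → Bool) → ℝ :=
    fun k => ∏ a : {x // ¬ x ∈ A},
      (if (∃ b : {y // y ∈ B}, k (a, b) = true) then ∏ b, w (k (a, b)) else 0) with hF3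
  set F4 : ({x // ¬ x ∈ A} × {y // ¬ y ∈ B} → Bool) → ℝ :=
    fun k => ∏ x, w (k x) with hF4
  -- pointwise factorization of the summand
  have key : ∀ g : Fin m × Fin n → Bool,
      (if IsMaxStableEvent A B g then bipWeight m n p g else 0)
        = F1 (fun x => g (E.symm (Sum.inl (Sum.inl x)))) *
          F2 (fun x => g (E.symm (Sum.inl (Sum.inr x)))) *
          F3 (fun x => g (E.symm (Sum.inr (Sum.inl x)))) *
          F4 (fun x => g (E.symm (Sum.inr (Sum.inr x)))) := by
    intro g
    by_cases hg : IsMaxStableEvent A B g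
    · rw [if_pos hg]
      obtain ⟨h1, h2, h3⟩ := hg
      have hW : bipWeight m n p g
          = (∏ x : {x // x ∈ A} × {y // y ∈ B}, w (g (E.symm (Sum.inl (Sum.inl x))))) *
            (∏ x : {x // x ∈ A} × {y // ¬ y ∈ B}, w (g (E.symm (Sum.inl (Sum.inr x))))) *
            ((∏ x : {x // ¬ x ∈ A} × {y // y ∈ B}, w (g (E.symm (Sum.inr (Sum.inl x))))) *
             (∏ x : {x // ¬ x ∈ A} × {y // ¬ y ∈ B}, w (g (E.symm (Sum.inr (Sum.inr x)))))) := by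
        have := Fintype.prod_equiv E (fun x => w (g x)) (fun y => w (g (E.symm y)))
          (fun x => by simp)
        rw [show bipWeight m n p g = ∏ x : Fin m × Fin n, w (g x) from rfl, this,
          Fintype.prod_sum_type, Fintype.prod_sum_type, Fintype.prod_sum_type, mul_assoc]
      rw [hW]
      have e1 : F1 (fun x => g (E.symm (Sum.inl (Sum.inl x))))
          = ∏ x : {x // x ∈ A} × {y // y ∈ B}, w (g (E.symm (Sum.inl (Sum.inl x)))) := by
        rw [hF1]
        refine Finset.prod_congr rfl fun x _ => ?_
        have hx : g (E.symm (Sum.inl (Sum.inl x))) = false := by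
          rw [hE1]
          have := h1 x.1.1 x.1.2 x.2.1 x.2.2
          simpa using this
        simp [hx, hw]
      have e2 : F2 (fun x => g (E.symm (Sum.inl (Sum.inr x))))
          = ∏ x : {x // x ∈ A} × {y // ¬ y ∈ B}, w (g (E.symm (Sum.inl (Sum.inr x)))) := by
        rw [hF2, Fintype.prod_prod_type
          (f := fun x : {x // x ∈ A} × {y // ¬ y ∈ B} => w (g (E.symm (Sum.inl (Sum.inr x))))),
          Finset.prod_comm]
        refine Finset.prod_congr rfl fun y _ => ?_
        rw [if_pos]
        obtain ⟨a, ha, hga⟩ := h3 y.1 y.2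
        exact ⟨⟨a, ha⟩, hga⟩
      have e3 : F3 (fun x => g (E.symm (Sum.inr (Sum.inl x))))
          = ∏ x : {x // ¬ x ∈ A} × {y // y ∈ B}, w (g (E.symm (Sum.inr (Sum.inl x)))) := by
        rw [hF3, Fintype.prod_prod_type
          (f := fun x : {x // ¬ x ∈ A} × {y // y ∈ B} => w (g (E.symm (Sum.inr (Sum.inl x)))))]
        refine Finset.prod_congr rfl fun a _ => ?_
        rw [if_pos]
        obtain ⟨b, hb, hgb⟩ := h2 a.1 a.2
        exact ⟨⟨b, hb⟩, hgb⟩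
      rw [e1, e2, e3, hF4]
      ring
    · rw [if_neg hg]
      by_cases h1 : ∀ a ∈ A, ∀ b ∈ B, ¬ g (a, b) = true
      · by_cases h2 : ∀ a, a ∉ A → ∃ b ∈ B, g (a, b) = true
        · by_cases h3 : ∀ b, b ∉ B → ∃ a ∈ A, g (a, b) = true
          · exact absurd ⟨h1, h2, h3⟩ hg
          · push_neg at h3
            obtain ⟨b, hb, hall⟩ := h3
            have hz : F2 (fun x => g (E.symm (Sum.inl (Sum.inr x)))) = 0 := by
              rw [hF2]
              refine Finset.prod_eq_zero (Finset.mem_univ (⟨b, hb⟩ : {y // ¬ y ∈ B})) ?_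
              rw [if_neg]
              rintro ⟨a, ha⟩
              exact hall a.1 a.2 ha
            rw [hz]; ring
        · push_neg at h2
          obtain ⟨a, ha, hall⟩ := h2
          have hz : F3 (fun x => g (E.symm (Sum.inr (Sum.inl x)))) = 0 := by
            rw [hF3]
            refine Finset.prod_eq_zero (Finset.mem_univ (⟨a, ha⟩ : {x // ¬ x ∈ A})) ?_
            rw [if_neg]
            rintro ⟨b, hgb⟩
            exact hall b.1 b.2 hgb
          rw [hz]; ring
      · push_neg at h1
        obtain ⟨a, ha, b, hb, hgab⟩ := h1
        have hz : F1 (fun x => g (E.symm (Sum.inl (Sum.inl x)))) = 0 := by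
          rw [hF1]
          refine Finset.prod_eq_zero
            (Finset.mem_univ ((⟨a, ha⟩, ⟨b, hb⟩) : {x // x ∈ A} × {y // y ∈ B})) ?_
          exact if_pos hgab
        rw [hz]; ring
  -- sum the factorization
  rw [bipProb, Finset.sum_congr rfl (fun g _ => key g), sum_split4 E F1 F2 F3 F4]
  -- compute the four sums
  have S1 : ∑ k : {x // x ∈ A} × {y // y ∈ B} → Bool, F1 k = (1 - p) ^ (ℓ * r) := by
    rw [hF1, sum_prod_pi (f := fun _ (t : Bool) => if t then 0 else 1 - p)]
    simp [Fintype.card_prod, hcSA, hcSB]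
  have S4 : ∑ k : {x // ¬ x ∈ A} × {y // ¬ y ∈ B} → Bool, F4 k = 1 := by
    rw [hF4, sum_prod_pi (f := fun _ (t : Bool) => w t)]
    simp [hw]
  have SG : (∑ h : {x // x ∈ A} → Bool,
      (if (∃ a, h a = true) then ∏ a, w (h a) else 0)) = 1 - (1 - p) ^ ℓ := by
    rw [hw]
    rw [sum_exists_aux (α := {x // x ∈ A}) p, hcSA]
  have SH : (∑ h : {y // y ∈ B} → Bool,
      (if (∃ b, h b = true) then ∏ b, w (h b) else 0)) = 1 - (1 - p) ^ r := by
    rw [hw]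
    rw [sum_exists_aux (α := {y // y ∈ B}) p, hcSB]
  have S2 : ∑ k : {x // x ∈ A} × {y // ¬ y ∈ B} → Bool, F2 k = (1 - (1 - p) ^ ℓ) ^ (n - r) := by
    have hre := Fintype.sum_equiv
      (((Equiv.prodComm {x // x ∈ A} {y // ¬ y ∈ B}).arrowCongr (Equiv.refl Bool)).trans
        (Equiv.curry _ _ _))
      (fun k : {x // x ∈ A} × {y // ¬ y ∈ B} → Bool => F2 k)
      (fun h : {y // ¬ y ∈ B} → ({x // x ∈ A} → Bool) =>
        ∏ y, (if (∃ a, h y a = true) then ∏ a, w (h y a) else 0))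
      (fun k => by rw [hF2]; rfl)
    rw [hre, sum_prod_pi (f := fun (_ : {y // ¬ y ∈ B}) (h : {x // x ∈ A} → Bool) =>
      (if (∃ a, h a = true) then ∏ a, w (h a) else 0))]
    rw [Finset.prod_congr rfl (fun y _ => SG), Finset.prod_const, Finset.card_univ, hcSBc]
  have S3 : ∑ k : {x // ¬ x ∈ A} × {y // y ∈ B} → Bool, F3 k = (1 - (1 - p) ^ r) ^ (m - ℓ) := by
    have hre := Fintype.sum_equiv (Equiv.curry {x // ¬ x ∈ A} {y // y ∈ B} Bool)
      (fun k : {x // ¬ x ∈ A} × {y // y ∈ B} → Bool => F3 k)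
      (fun h : {x // ¬ x ∈ A} → ({y // y ∈ B} → Bool) =>
        ∏ a, (if (∃ b, h a b = true) then ∏ b, w (h a b) else 0))
      (fun k => by rw [hF3]; rfl)
    rw [hre, sum_prod_pi (f := fun (_ : {x // ¬ x ∈ A}) (h : {y // y ∈ B} → Bool) =>
      (if (∃ b, h b = true) then ∏ b, w (h b) else 0))]
    rw [Finset.prod_congr rfl (fun a _ => SH), Finset.prod_const, Finset.card_univ, hcSAc]
  rw [S1, S2, S3, S4]
  ring
end

section
/- Let 0 < q < 1, let m, n, ℓ*, r* be nonnegative integers with ℓ* ≤ m, r* ≤ n, and suppose n·q^{ℓ*} ≤ 1/2. Then the expected number of stable sets of a random bipartite graph G ∈ ℬ(m,n;p) (with q = 1−p) that have at least ℓ* vertices in L(G) and at least r* vertices in R(G) is at most 2^{m+1} · (n·q^{ℓ*})^{r*}. -/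
open Finset
open scoped Classical

/-- Key independence computation: the probability that there is no edge between `A` and `B`
is `q ^ (|A| * |B|)`. -/
lemma key_noedge {m n : ℕ} (p q : ℝ) (hq : q = 1 - p) (A : Finset (Fin m))
    (B : Finset (Fin n)) :
    (∑ g : Fin m × Fin n → Bool,
      if ∀ a ∈ A, ∀ b ∈ B, ¬ g (a, b) = true then bipWeight m n p g else 0)
      = q ^ (A.card * B.card) := by
  set F : Fin m × Fin n → Bool → ℝ := fun e b =>
    if e.1 ∈ A ∧ e.2 ∈ B then (if b then 0 else q) else (if b then p else 1 - p) with hF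
  have hterm : ∀ g : Fin m × Fin n → Bool,
      (if ∀ a ∈ A, ∀ b ∈ B, ¬ g (a, b) = true then bipWeight m n p g else 0)
      = ∏ e : Fin m × Fin n, F e (g e) := by
    intro g
    by_cases h : ∀ a ∈ A, ∀ b ∈ B, ¬ g (a, b) = true
    · rw [if_pos h]
      unfold bipWeight
      refine Finset.prod_congr rfl fun e _ => ?_
      by_cases he : e.1 ∈ A ∧ e.2 ∈ B
      · have hge : ¬ g (e.1, e.2) = true := h e.1 he.1 e.2 he.2
        have hge' : g e = false := by
          rw [← Bool.not_eq_true]; simpa using hge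
        simp [hF, he, hge', hq]
      · simp [hF, he]
    · rw [if_neg h]
      push_neg at h
      obtain ⟨a, ha, b, hb, hab⟩ := h
      refine (Finset.prod_eq_zero (Finset.mem_univ (a, b)) ?_).symm
      simp [hF, ha, hb, hab]
  rw [Finset.sum_congr rfl fun g _ => hterm g, ← Fintype.prod_sum F]
  have hsum : ∀ e : Fin m × Fin n, (∑ b : Bool, F e b)
      = if e ∈ A ×ˢ B then q else 1 := by
    intro e
    rcases Classical.em (e.1 ∈ A ∧ e.2 ∈ B) with he | he <;>
      simp only [hF, he, Finset.mem_product, Fintype.sum_bool, if_true, if_false] <;>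
      · simp [he]; try linarith
  rw [Finset.prod_congr rfl fun e _ => hsum e, Finset.prod_ite_mem,
    Finset.univ_inter, Finset.prod_const, Finset.card_product]

lemma geo_bound (x : ℝ) (hx0 : 0 ≤ x) (hx : x ≤ 1/2) :
    ∀ k : ℕ, ∑ j ∈ Finset.range k, x ^ j ≤ 2 := by
  intro k
  induction k with
  | zero => norm_num
  | succ k ih =>
    rw [geom_sum_succ]
    have hpos : 0 ≤ ∑ j ∈ Finset.range k, x ^ j :=
      Finset.sum_nonneg fun j _ => pow_nonneg hx0 j
    nlinarith

theorem stmt_4 (m n ℓ r : ℕ) (p q : ℝ) (hq : q = 1 - p) (hq0 : 0 < q) (hq1 : q < 1)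
    (hℓ : ℓ ≤ m) (hr : r ≤ n) (hsmall : (n : ℝ) * q ^ ℓ ≤ 1/2) :
    (∑ g : Fin m × Fin n → Bool, bipWeight m n p g *
        ((Finset.univ.filter (fun AB : Finset (Fin m) × Finset (Fin n) =>
            ℓ ≤ AB.1.card ∧ r ≤ AB.2.card ∧
              ∀ a ∈ AB.1, ∀ b ∈ AB.2, ¬ (g (a, b) = true))).card : ℝ))
      ≤ 2 ^ (m + 1) * ((n : ℝ) * q ^ ℓ) ^ r := by
  set x : ℝ := (n : ℝ) * q ^ ℓ with hx
  have hx0 : 0 ≤ x := mul_nonneg (Nat.cast_nonneg n) (pow_nonneg hq0.le ℓ)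
  -- Step 1: rewrite the LHS as a sum over pairs of sets.
  have h1 : (∑ g : Fin m × Fin n → Bool, bipWeight m n p g *
        ((Finset.univ.filter (fun AB : Finset (Fin m) × Finset (Fin n) =>
            ℓ ≤ AB.1.card ∧ r ≤ AB.2.card ∧
              ∀ a ∈ AB.1, ∀ b ∈ AB.2, ¬ (g (a, b) = true))).card : ℝ))
      = ∑ AB ∈ (Finset.univ.filter (fun AB : Finset (Fin m) × Finset (Fin n) =>
            ℓ ≤ AB.1.card ∧ r ≤ AB.2.card)), q ^ (AB.1.card * AB.2.card) := by
    have hstep : ∀ g : Fin m × Fin n → Bool, bipWeight m n p g *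
        ((Finset.univ.filter (fun AB : Finset (Fin m) × Finset (Fin n) =>
            ℓ ≤ AB.1.card ∧ r ≤ AB.2.card ∧
              ∀ a ∈ AB.1, ∀ b ∈ AB.2, ¬ (g (a, b) = true))).card : ℝ)
        = ∑ AB : Finset (Fin m) × Finset (Fin n),
            if ℓ ≤ AB.1.card ∧ r ≤ AB.2.card ∧
              ∀ a ∈ AB.1, ∀ b ∈ AB.2, ¬ (g (a, b) = true)
            then bipWeight m n p g else 0 := by
      intro g
      rw [Finset.card_filter]
      push_cast
      rw [Finset.mul_sum]
      exact Finset.sum_congr rfl fun AB _ => by split <;> simp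
    rw [Finset.sum_congr rfl fun g _ => hstep g, Finset.sum_comm]
    have h2 : ∀ AB : Finset (Fin m) × Finset (Fin n),
        (∑ g : Fin m × Fin n → Bool,
          if ℓ ≤ AB.1.card ∧ r ≤ AB.2.card ∧
            ∀ a ∈ AB.1, ∀ b ∈ AB.2, ¬ (g (a, b) = true)
          then bipWeight m n p g else 0)
        = if ℓ ≤ AB.1.card ∧ r ≤ AB.2.card then q ^ (AB.1.card * AB.2.card) else 0 := by
      intro AB
      by_cases hc : ℓ ≤ AB.1.card ∧ r ≤ AB.2.card
      · rw [if_pos hc, ← key_noedge p q hq AB.1 AB.2]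
        exact Finset.sum_congr rfl fun g _ => by simp [hc.1, hc.2]
      · rw [if_neg hc]
        exact Finset.sum_eq_zero fun g _ => if_neg (by tauto)
    rw [Finset.sum_congr rfl fun AB _ => h2 AB]
    exact (Finset.sum_filter _ _).symm
  rw [h1]
  -- Step 2: split the pair sum.
  have hsplit : (Finset.univ.filter (fun AB : Finset (Fin m) × Finset (Fin n) =>
        ℓ ≤ AB.1.card ∧ r ≤ AB.2.card))
      = (Finset.univ.filter (fun A : Finset (Fin m) => ℓ ≤ A.card)) ×ˢ
        (Finset.univ.filter (fun B : Finset (Fin n) => r ≤ B.card)) := by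
    ext AB
    simp [Finset.mem_filter, Finset.mem_product]
  rw [hsplit, Finset.sum_product]
  -- Step 3: bound the inner sum.
  set SB := Finset.univ.filter (fun B : Finset (Fin n) => r ≤ B.card) with hSBdef
  have hT : (∑ B ∈ SB, (q ^ ℓ) ^ B.card) ≤ 2 * x ^ r := by
    have hSB : SB = (Finset.Icc r n).biUnion
        (fun b => Finset.powersetCard b (Finset.univ : Finset (Fin n))) := by
      ext B
      simp only [hSBdef, Finset.mem_filter, Finset.mem_univ, true_and,
        Finset.mem_biUnion, Finset.mem_Icc, Finset.mem_powersetCard]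
      constructor
      · intro h
        exact ⟨B.card, ⟨h, by simpa using Finset.card_le_univ B⟩,
          Finset.subset_univ B, rfl⟩
      · rintro ⟨b, ⟨hrb, -⟩, -, rfl⟩; exact hrb
    rw [hSB, Finset.sum_biUnion]
    · have hinner : ∀ b ∈ Finset.Icc r n,
          (∑ B ∈ Finset.powersetCard b (Finset.univ : Finset (Fin n)),
            (q ^ ℓ) ^ B.card) = (n.choose b : ℝ) * (q ^ ℓ) ^ b := by
        intro b _
        rw [Finset.sum_congr rfl fun B hB => by
          rw [(Finset.mem_powersetCard.mp hB).2]]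
        rw [Finset.sum_const, Finset.card_powersetCard, nsmul_eq_mul]
        simp
      rw [Finset.sum_congr rfl hinner]
      have hterm : ∀ b ∈ Finset.Icc r n, (n.choose b : ℝ) * (q ^ ℓ) ^ b ≤ x ^ b := by
        intro b _
        have h1 : (n.choose b : ℝ) ≤ (n : ℝ) ^ b := by
          exact_mod_cast Nat.choose_le_pow n b
        have h2 : (0 : ℝ) ≤ (q ^ ℓ) ^ b := pow_nonneg (pow_nonneg hq0.le ℓ) b
        calc (n.choose b : ℝ) * (q ^ ℓ) ^ b ≤ (n : ℝ) ^ b * (q ^ ℓ) ^ b :=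
              mul_le_mul_of_nonneg_right h1 h2
          _ = x ^ b := by rw [hx, mul_pow]
      refine le_trans (Finset.sum_le_sum hterm) ?_
      have hIcc : Finset.Icc r n = Finset.Ico r (n + 1) := by
        rw [Finset.Ico_add_one_right_eq_Icc]
      rw [hIcc, Finset.sum_Ico_eq_sum_range]
      have : (∑ j ∈ Finset.range (n + 1 - r), x ^ (r + j))
          = x ^ r * ∑ j ∈ Finset.range (n + 1 - r), x ^ j := by
        rw [Finset.mul_sum]
        exact Finset.sum_congr rfl fun j _ => by rw [pow_add]
      rw [this]
      have hg := geo_bound x hx0 hsmall (n + 1 - r)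
      have hxr : 0 ≤ x ^ r := pow_nonneg hx0 r
      nlinarith
    · intro b _ c _ hbc
      simp only [Function.onFun, Finset.disjoint_left, Finset.mem_powersetCard]
      rintro B ⟨-, rfl⟩ ⟨-, h⟩
      exact hbc h
  -- Step 4: bound the outer sum.
  have hqle : ∀ A ∈ Finset.univ.filter (fun A : Finset (Fin m) => ℓ ≤ A.card),
      ∀ B ∈ SB, q ^ (A.card * B.card) ≤ (q ^ ℓ) ^ B.card := by
    intro A hA B _
    rw [Finset.mem_filter] at hA
    rw [← pow_mul]
    exact pow_le_pow_of_le_one hq0.le hq1.le (Nat.mul_le_mul_right _ hA.2)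
  have hcardSA : ((Finset.univ.filter (fun A : Finset (Fin m) => ℓ ≤ A.card)).card : ℝ)
      ≤ 2 ^ m := by
    have := Finset.card_le_univ (Finset.univ.filter (fun A : Finset (Fin m) => ℓ ≤ A.card))
    have hcf : Fintype.card (Finset (Fin m)) = 2 ^ m := by
      rw [Fintype.card_finset, Fintype.card_fin]
    exact_mod_cast le_trans this (le_of_eq hcf)
  have hT0 : 0 ≤ ∑ B ∈ SB, (q ^ ℓ) ^ B.card :=
    Finset.sum_nonneg fun B _ => pow_nonneg (pow_nonneg hq0.le ℓ) _
  calc (∑ A ∈ Finset.univ.filter (fun A : Finset (Fin m) => ℓ ≤ A.card),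
        ∑ B ∈ SB, q ^ (A.card * B.card))
      ≤ ∑ A ∈ Finset.univ.filter (fun A : Finset (Fin m) => ℓ ≤ A.card),
        ∑ B ∈ SB, (q ^ ℓ) ^ B.card :=
        Finset.sum_le_sum fun A hA => Finset.sum_le_sum (hqle A hA)
    _ = ((Finset.univ.filter (fun A : Finset (Fin m) => ℓ ≤ A.card)).card : ℝ) *
        (∑ B ∈ SB, (q ^ ℓ) ^ B.card) := by
        rw [Finset.sum_const, nsmul_eq_mul]
    _ ≤ 2 ^ m * (2 * x ^ r) := by
        have hxr : 0 ≤ x ^ r := pow_nonneg hx0 r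
        have h2m : (0:ℝ) ≤ 2 ^ m := by positivity
        nlinarith
    _ = 2 ^ (m + 1) * x ^ r := by ring
end

section
/- Let G be a bipartite graph and let H be an induced subgraph of G obtained by restricting to L(G) ∪ R' for some R' ⊆ R(G). Then every maximal stable set S of H extends to a maximal stable set S' of G with S' ∩ V(H) = S, and this extension can be chosen injectively over the maximal stable sets of H. In particular, the number of maximal stable sets of G is at least the number of maximal stable sets of H. -/
open Finset
open scoped Classical

variable {V : Type*}

/-- `S` is a maximal stable set of the subgraph of `G` induced on the vertex set `W`. -/
def IsMaxStableOn [Fintype V] [DecidableEq V] (G : SimpleGraph V) (W S : Finset V) : Prop :=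
  S ⊆ W ∧ (∀ u ∈ S, ∀ v ∈ S, ¬ G.Adj u v) ∧ ∀ v ∈ W, v ∉ S → ∃ u ∈ S, G.Adj v u

/-- The maximal stable sets of the induced subgraph `G[W]`. -/
noncomputable def mstabOn [Fintype V] [DecidableEq V] (G : SimpleGraph V) (W : Finset V) :
    Finset (Finset V) :=
  Finset.univ.filter (fun S => IsMaxStableOn G W S)

theorem stmt_10 [Fintype V] [DecidableEq V] (G : SimpleGraph V) (L R : Finset V)
    (hbip : IsBip G L R) (R' : Finset V) (hR' : R' ⊆ R) :
    (∃ f : Finset V → Finset V,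
        Set.InjOn f ↑(mstabOn G (L ∪ R')) ∧
        ∀ S ∈ mstabOn G (L ∪ R'), f S ∈ mstab G ∧ f S ∩ (L ∪ R') = S) ∧
      (mstabOn G (L ∪ R')).card ≤ (mstab G).card := by
  obtain ⟨hdis, hcov, hadj⟩ := hbip
  set W := L ∪ R' with hW
  set f : Finset V → Finset V := fun S =>
    S ∪ (Finset.univ.filter (fun v => v ∉ W ∧ ∀ u ∈ S, ¬ G.Adj v u)) with hf
  have key : ∀ S ∈ mstabOn G W, f S ∈ mstab G ∧ f S ∩ W = S := by
    intro S hS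
    rw [mstabOn, Finset.mem_filter] at hS
    obtain ⟨-, hSW, hstab, hmax⟩ := hS
    have hR'' : ∀ v, v ∉ W → v ∈ R := by
      intro v hv
      rcases Finset.mem_union.mp (hcov v) with h | h
      · exact absurd (Finset.mem_union_left _ h) hv
      · exact h
    have hint : f S ∩ W = S := by
      apply Finset.ext
      intro x
      simp only [hf, Finset.mem_inter, Finset.mem_union, Finset.mem_filter]
      constructor
      · rintro ⟨h1 | h1, h2⟩
        · exact h1
        · exact absurd h2 h1.2.1
      · intro h; exact ⟨Or.inl h, hSW h⟩
    refine ⟨?_, hint⟩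
    rw [mstab, Finset.mem_filter]
    refine ⟨Finset.mem_univ _, ?_, ?_⟩
    · intro u hu v hv hadj'
      simp only [hf, Finset.mem_union, Finset.mem_filter] at hu hv
      rcases hu with hu | hu <;> rcases hv with hv | hv
      · exact hstab u hu v hv hadj'
      · exact hv.2.2 u hu (hadj'.symm)
      · exact hu.2.2 v hv hadj'
      · have h1 := hR'' u hu.2.1
        have h2 := hR'' v hv.2.1
        rcases hadj hadj' with ⟨ha, _⟩ | ⟨_, hb⟩
        · exact (Finset.disjoint_left.mp hdis ha h1).elim
        · exact (Finset.disjoint_left.mp hdis hb h2).elim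
    · intro v hv
      simp only [hf, Finset.mem_union, Finset.mem_filter, Finset.mem_univ, true_and,
        not_or, not_and, not_forall] at hv
      obtain ⟨hv1, hv2⟩ := hv
      by_cases hvW : v ∈ W
      · obtain ⟨u, hu, hadj'⟩ := hmax v hvW hv1
        exact ⟨u, Finset.mem_union_left _ hu, hadj'⟩
      · obtain ⟨u, hu, hadj'⟩ := hv2 hvW
        push_neg at hadj'
        exact ⟨u, Finset.mem_union_left _ hu, hadj'⟩
  have hinj : Set.InjOn f ↑(mstabOn G W) := by
    intro S1 h1 S2 h2 heq
    have e1 := (key S1 h1).2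
    have e2 := (key S2 h2).2
    rw [← e1, ← e2, heq]
  refine ⟨⟨f, hinj, key⟩, ?_⟩
  exact Finset.card_le_card_of_injOn f (fun S hS => (key S hS).1) hinj
end

section
/- Let G be a bipartite graph with |L(G)| = m and suppose G contains an induced matching covering all m vertices of L(G) (an induced matching of size m using all of L(G)). Then every subset of L(G) is the intersection with L(G) of some maximal stable set of G, and consequently the average of |A ∩ L(G)| over all maximal stable sets A of G equals m/2. -/
open Finset
open scoped Classical

variable {V : Type*}

/-- Any stable set extends to a maximal stable set. -/
lemma extend_stable [Fintype V] [DecidableEq V] (G : SimpleGraph V) :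
    ∀ n (S0 : Finset V), Fintype.card V ≤ S0.card + n →
      (∀ u ∈ S0, ∀ v ∈ S0, ¬ G.Adj u v) →
      ∃ S, S0 ⊆ S ∧ IsMaxStable G S := by
  intro n
  induction n with
  | zero =>
    intro S0 hcard hst
    have : S0 = Finset.univ :=
      Finset.eq_univ_of_card S0
        (le_antisymm (Finset.card_le_univ S0) (by simpa using hcard))
    refine ⟨S0, subset_rfl, hst, ?_⟩
    intro v hv
    exact absurd (this ▸ Finset.mem_univ v) hv
  | succ n ih =>
    intro S0 hcard hst
    by_cases h : ∀ v, v ∉ S0 → ∃ u ∈ S0, G.Adj v u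
    · exact ⟨S0, subset_rfl, hst, h⟩
    · push_neg at h
      obtain ⟨v, hv, hvn⟩ := h
      have hcard' : Fintype.card V ≤ (insert v S0).card + n := by
        rw [Finset.card_insert_of_notMem hv]; omega
      have hst' : ∀ u ∈ insert v S0, ∀ w ∈ insert v S0, ¬ G.Adj u w := by
        intro u hu w hw hadj
        rcases Finset.mem_insert.1 hu with h1 | h1
        · rcases Finset.mem_insert.1 hw with h2 | h2
          · exact G.irrefl (h1 ▸ h2 ▸ hadj)
          · exact hvn w h2 (h1 ▸ hadj)
        · rcases Finset.mem_insert.1 hw with h2 | h2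
          · exact hvn u h1 (h2 ▸ hadj.symm)
          · exact hst u h1 w h2 hadj
      obtain ⟨S, hsub, hS⟩ := ih (insert v S0) hcard' hst'
      exact ⟨S, (Finset.subset_insert v S0).trans hsub, hS⟩

theorem stmt_12 [Fintype V] [DecidableEq V] (G : SimpleGraph V) (L R : Finset V)
    (hbip : IsBip G L R) (m : ℕ) (hm : L.card = m) (M : V → V)
    (hMR : ∀ v ∈ L, M v ∈ R) (hMinj : Set.InjOn M ↑L)
    (hMadj : ∀ v ∈ L, G.Adj v (M v))
    (hinduced : ∀ u ∈ L, ∀ v ∈ L, G.Adj u (M v) → u = v) :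
    (∀ T ⊆ L, ∃ S ∈ mstab G, S ∩ L = T) ∧
      (∑ A ∈ mstab G, ((A ∩ L).card : ℝ)) / ((mstab G).card : ℝ) = m / 2 := by
  obtain ⟨hdisj, hcover, hadjLR⟩ := hbip
  -- no edges within L, no edges within R
  have hLR : ∀ x ∈ L, x ∉ R := fun x hx => Finset.disjoint_left.1 hdisj hx
  have noLL : ∀ u ∈ L, ∀ v ∈ L, ¬ G.Adj u v := by
    intro u hu v hv hadj
    rcases hadjLR hadj with ⟨_, h2⟩ | ⟨h1, _⟩
    · exact hLR v hv h2
    · exact hLR u hu h1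
  have noRR : ∀ u ∈ R, ∀ v ∈ R, ¬ G.Adj u v := by
    intro u hu v hv hadj
    rcases hadjLR hadj with ⟨h1, _⟩ | ⟨_, h2⟩
    · exact hLR u h1 hu
    · exact hLR v h2 hv
  -- Part 1
  have part1 : ∀ T ⊆ L, ∃ S ∈ mstab G, S ∩ L = T := by
    intro T hT
    set S0 : Finset V := T ∪ (L \ T).image M with hS0
    have hS0st : ∀ u ∈ S0, ∀ v ∈ S0, ¬ G.Adj u v := by
      intro u hu v hv hadj
      rcases Finset.mem_union.1 hu with hu | hu <;>
        rcases Finset.mem_union.1 hv with hv | hv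
      · exact noLL u (hT hu) v (hT hv) hadj
      · obtain ⟨w, hw, rfl⟩ := Finset.mem_image.1 hv
        have := hinduced u (hT hu) w (Finset.sdiff_subset hw)
        exact (Finset.mem_sdiff.1 hw).2 (this hadj ▸ hu)
      · obtain ⟨w, hw, rfl⟩ := Finset.mem_image.1 hu
        have := hinduced v (hT hv) w (Finset.sdiff_subset hw)
        exact (Finset.mem_sdiff.1 hw).2 (this hadj.symm ▸ hv)
      · obtain ⟨w, hw, rfl⟩ := Finset.mem_image.1 hu
        obtain ⟨w', hw', rfl⟩ := Finset.mem_image.1 hv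
        exact noRR _ (hMR w (Finset.sdiff_subset hw)) _
          (hMR w' (Finset.sdiff_subset hw')) hadj
    obtain ⟨S, hsub, hS⟩ := extend_stable G (Fintype.card V) S0 (by omega) hS0st
    refine ⟨S, by simp [mstab, hS], ?_⟩
    apply Finset.Subset.antisymm
    · intro x hx
      obtain ⟨hxS, hxL⟩ := Finset.mem_inter.1 hx
      by_contra hxT
      have hMx : M x ∈ S := hsub (Finset.mem_union_right _
        (Finset.mem_image_of_mem M (Finset.mem_sdiff.2 ⟨hxL, hxT⟩)))
      exact hS.1 x hxS (M x) hMx (hMadj x hxL)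
    · intro x hx
      exact Finset.mem_inter.2 ⟨hsub (Finset.mem_union_left _ hx), hT hx⟩
  refine ⟨part1, ?_⟩
  -- injectivity of the trace map
  have trace_subset : ∀ A B : Finset V, IsMaxStable G A → IsMaxStable G B →
      A ∩ L = B ∩ L → A ⊆ B := by
    intro A B hA hB hAB x hxA
    by_cases hxL : x ∈ L
    · have : x ∈ B ∩ L := hAB ▸ Finset.mem_inter.2 ⟨hxA, hxL⟩
      exact (Finset.mem_inter.1 this).1
    · by_contra hxB
      obtain ⟨u, huB, hadj⟩ := hB.2 x hxB
      have huL : u ∈ L := by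
        rcases hadjLR hadj with ⟨h1, _⟩ | ⟨_, h2⟩
        · exact absurd h1 hxL
        · exact h2
      have : u ∈ A ∩ L := hAB ▸ Finset.mem_inter.2 ⟨huB, huL⟩
      exact hA.1 x hxA u (Finset.mem_inter.1 this).1 hadj
  have trace_inj : ∀ A ∈ mstab G, ∀ B ∈ mstab G, A ∩ L = B ∩ L → A = B := by
    intro A hA B hB h
    simp only [mstab, Finset.mem_filter] at hA hB
    exact Finset.Subset.antisymm (trace_subset A B hA.2 hB.2 h)
      (trace_subset B A hB.2 hA.2 h.symm)
  -- bijection with the powerset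
  have hsum : ∑ A ∈ mstab G, ((A ∩ L).card : ℝ) =
      ∑ T ∈ L.powerset, (T.card : ℝ) := by
    apply Finset.sum_bij (fun A _ => A ∩ L)
    · intro A _; exact Finset.mem_powerset.2 Finset.inter_subset_right
    · intro A hA B hB h; exact trace_inj A hA B hB h
    · intro T hT
      obtain ⟨S, hS, hST⟩ := part1 T (Finset.mem_powerset.1 hT)
      exact ⟨S, hS, hST⟩
    · intro A _; rfl
  have hcard : (mstab G).card = L.powerset.card := by
    apply Finset.card_bij (fun A _ => A ∩ L)
    · intro A _; exact Finset.mem_powerset.2 Finset.inter_subset_right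
    · intro A hA B hB h; exact trace_inj A hA B hB h
    · intro T hT
      obtain ⟨S, hS, hST⟩ := part1 T (Finset.mem_powerset.1 hT)
      exact ⟨S, hS, hST⟩
  -- compute the powerset sum by the complement involution
  have hcompl : ∑ T ∈ L.powerset, (T.card : ℝ) =
      ∑ T ∈ L.powerset, ((L \ T).card : ℝ) := by
    apply Finset.sum_nbij' (fun T => L \ T) (fun T => L \ T)
    · intro T hT; exact Finset.mem_powerset.2 Finset.sdiff_subset
    · intro T hT; exact Finset.mem_powerset.2 Finset.sdiff_subset
    · intro T hT; exact Finset.sdiff_sdiff_eq_self (Finset.mem_powerset.1 hT)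
    · intro T hT; exact Finset.sdiff_sdiff_eq_self (Finset.mem_powerset.1 hT)
    · intro T hT
      rw [Finset.sdiff_sdiff_eq_self (Finset.mem_powerset.1 hT)]
  have hS2 : 2 * ∑ T ∈ L.powerset, (T.card : ℝ) = 2 ^ m * m := by
    have hsum2 : ∑ T ∈ L.powerset, ((T.card : ℝ) + ((L \ T).card : ℝ)) =
        ∑ T ∈ L.powerset, (m : ℝ) := by
      apply Finset.sum_congr rfl
      intro T hT
      have hsub := Finset.mem_powerset.1 hT
      rw [Finset.card_sdiff_of_subset hsub, Nat.cast_sub (Finset.card_le_card hsub), hm]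
      ring
    rw [Finset.sum_add_distrib, ← hcompl, Finset.sum_const, Finset.card_powerset, hm,
      nsmul_eq_mul] at hsum2
    push_cast at hsum2 ⊢
    linarith
  rw [hsum, hcard, Finset.card_powerset, hm]
  have h2 : ((2 : ℝ)) ^ m ≠ 0 := by positivity
  rw [div_eq_div_iff (by positivity) (by norm_num)]
  push_cast
  linarith
end

section
/- Let 0 < q < 1 and α < 1/2, and set ν = (1/2 − α)·(⌊log_q(1/4)⌋ + 1 − log_q(1/4)). Then ν > 0, and for all sufficiently large m and all n ≤ q^{−αm}, the expected number of stable sets of G ∈ ℬ(m,n;p) with at least m/2 vertices in L(G) and at least ⌊log_q(1/4)⌋ + 1 vertices in R(G) is at most 2·n^{log_q(1/4)}·q^{νm}. -/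
open Finset
open scoped Classical

/-- The probability that there is no edge between `A` and `B` is `q ^ (|A|·|B|)`. -/
lemma sum_noedge (m n : ℕ) (p q : ℝ) (hq : q = 1 - p) (A : Finset (Fin m)) (B : Finset (Fin n)) :
    (∑ g : Fin m × Fin n → Bool,
      if ∀ a ∈ A, ∀ b ∈ B, ¬ g (a, b) = true then bipWeight m n p g else 0)
      = q ^ (A.card * B.card) := by
  classical
  have key : ∀ g : Fin m × Fin n → Bool,
      (if ∀ a ∈ A, ∀ b ∈ B, ¬ g (a, b) = true then bipWeight m n p g else 0)
        = ∏ e : Fin m × Fin n,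
            (if e ∈ A ×ˢ B then (if g e then 0 else q) else (if g e then p else q)) := by
    intro g
    by_cases h : ∀ a ∈ A, ∀ b ∈ B, ¬ g (a, b) = true
    · rw [if_pos h, bipWeight]
      refine Finset.prod_congr rfl fun e _ => ?_
      by_cases he : e ∈ A ×ˢ B
      · obtain ⟨a, b⟩ := e
        rw [Finset.mem_product] at he
        have hg : g (a, b) = false := by
          have := h a he.1 b he.2; simpa using this
        simp [Finset.mem_product, he, hg, hq]
      · by_cases hg : g e <;> simp [he, hg, hq]
    · rw [if_neg h]
      push_neg at h
      obtain ⟨a, ha, b, hb, hg⟩ := h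
      refine (Finset.prod_eq_zero (Finset.mem_univ (a, b)) ?_).symm
      have hm : (a, b) ∈ A ×ˢ B := Finset.mem_product.2 ⟨ha, hb⟩
      simp [hm, hg]
  simp_rw [key]
  rw [← Fintype.prod_sum
      (fun (e : Fin m × Fin n) (b : Bool) =>
        if e ∈ A ×ˢ B then (if b then 0 else q) else (if b then p else q))]
  have h2 : ∀ e : Fin m × Fin n,
      (∑ b : Bool, if e ∈ A ×ˢ B then (if b then 0 else q) else (if b then p else q))
        = if e ∈ A ×ˢ B then q else 1 := by
    intro e
    rw [Fintype.sum_bool]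
    by_cases he : e ∈ A ×ˢ B <;> simp [he] <;> linarith [hq]
  simp_rw [h2]
  rw [Finset.prod_ite_mem, Finset.univ_inter, Finset.prod_const, Finset.card_product]

/-- Swapping the order of summation: the expected number of pairs `(A, B)` satisfying the
size constraints with no edge between `A` and `B`. -/
lemma step1 (m n : ℕ) (p q : ℝ) (hq : q = 1 - p)
    (P1 : Finset (Fin m) → Prop) (P2 : Finset (Fin n) → Prop) :
    (∑ g : Fin m × Fin n → Bool, bipWeight m n p g *
        ((Finset.univ.filter (fun AB : Finset (Fin m) × Finset (Fin n) =>
            P1 AB.1 ∧ P2 AB.2 ∧ ∀ a ∈ AB.1, ∀ b ∈ AB.2, ¬ (g (a, b) = true))).card : ℝ))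
      = ∑ AB ∈ Finset.univ.filter
          (fun AB : Finset (Fin m) × Finset (Fin n) => P1 AB.1 ∧ P2 AB.2),
          q ^ (AB.1.card * AB.2.card) := by
  classical
  have hcard : ∀ g : Fin m × Fin n → Bool,
      ((Finset.univ.filter (fun AB : Finset (Fin m) × Finset (Fin n) =>
          P1 AB.1 ∧ P2 AB.2 ∧ ∀ a ∈ AB.1, ∀ b ∈ AB.2, ¬ (g (a, b) = true))).card : ℝ)
        = ∑ AB : Finset (Fin m) × Finset (Fin n),
            if P1 AB.1 ∧ P2 AB.2 ∧ ∀ a ∈ AB.1, ∀ b ∈ AB.2, ¬ (g (a, b) = true)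
            then (1:ℝ) else 0 := by
    intro g
    rw [Finset.card_filter]
    push_cast
    rfl
  simp_rw [hcard, Finset.mul_sum, mul_ite, mul_one, mul_zero]
  rw [Finset.sum_comm]
  rw [Finset.sum_filter]
  refine Finset.sum_congr rfl fun AB _ => ?_
  by_cases hP : P1 AB.1 ∧ P2 AB.2
  · rw [if_pos hP, ← sum_noedge m n p q hq AB.1 AB.2]
    refine Finset.sum_congr rfl fun g _ => ?_
    by_cases hg : ∀ a ∈ AB.1, ∀ b ∈ AB.2, ¬ g (a, b) = true
    · rw [if_pos ⟨hP.1, hP.2, hg⟩, if_pos hg]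
    · rw [if_neg, if_neg hg]
      rintro ⟨-, -, h⟩; exact hg h
  · rw [if_neg hP]
    refine Finset.sum_eq_zero fun g _ => ?_
    rw [if_neg]
    rintro ⟨h1, h2, -⟩; exact hP ⟨h1, h2⟩

lemma geom_two (s : ℝ) (hs0 : 0 ≤ s) (hs : s ≤ 1/2) (N : ℕ) :
    ∑ i ∈ Finset.range N, s ^ i ≤ 2 := by
  induction N with
  | zero => norm_num
  | succ N ih =>
    have h2 : (0:ℝ) ≤ ∑ i ∈ range N, s ^ i :=
      Finset.sum_nonneg fun i _ => pow_nonneg hs0 i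
    rw [Finset.sum_range_succ']
    simp only [pow_succ']
    rw [← Finset.mul_sum, pow_zero]
    nlinarith

lemma tail_geom (s : ℝ) (hs0 : 0 ≤ s) (hs : s ≤ 1/2) (k N : ℕ) :
    ∑ r ∈ Finset.range N, (if k ≤ r then s ^ r else 0) ≤ 2 * s ^ k := by
  rw [← Finset.sum_filter]
  have hfe : (Finset.range N).filter (fun r => k ≤ r) = Finset.Ico k N := by
    ext r; simp [Finset.mem_Ico]; omega
  rw [hfe, Finset.sum_Ico_eq_sum_range]
  simp only [pow_add]
  rw [← Finset.mul_sum]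
  have := geom_two s hs0 hs (N - k)
  have hk : (0:ℝ) ≤ s ^ k := pow_nonneg hs0 k
  nlinarith

lemma count_bound (m n k : ℕ) (q : ℝ) (hq0 : 0 < q) (hq1 : q < 1)
    (hs : (n : ℝ) * q ^ ((m:ℝ)/2) ≤ 1/2) :
    ∑ AB ∈ Finset.univ.filter
        (fun AB : Finset (Fin m) × Finset (Fin n) =>
          (m : ℝ) / 2 ≤ (AB.1.card : ℝ) ∧ k ≤ AB.2.card),
        q ^ (AB.1.card * AB.2.card)
      ≤ 2 ^ m * (2 * ((n : ℝ) * q ^ ((m:ℝ)/2)) ^ k) := by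
  classical
  set s : ℝ := (n : ℝ) * q ^ ((m:ℝ)/2) with hs_def
  have hqm : (0:ℝ) < q ^ ((m:ℝ)/2) := Real.rpow_pos_of_pos hq0 _
  have hs0 : 0 ≤ s := mul_nonneg (Nat.cast_nonneg n) hqm.le
  have hterm : ∀ AB : Finset (Fin m) × Finset (Fin n),
      (m : ℝ) / 2 ≤ (AB.1.card : ℝ) →
      q ^ (AB.1.card * AB.2.card) ≤ (q ^ ((m:ℝ)/2)) ^ AB.2.card := by
    intro AB hA
    have h1 : (q:ℝ) ^ (AB.1.card * AB.2.card) = q ^ ((AB.1.card * AB.2.card : ℕ) : ℝ) := by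
      rw [Real.rpow_natCast]
    have h2 : ((q:ℝ) ^ ((m:ℝ)/2)) ^ AB.2.card = q ^ ((m:ℝ)/2 * AB.2.card) := by
      rw [← Real.rpow_natCast (q ^ ((m:ℝ)/2)) AB.2.card, ← Real.rpow_mul hq0.le]
    rw [h1, h2]
    apply Real.rpow_le_rpow_of_exponent_ge hq0 hq1.le
    push_cast
    exact mul_le_mul_of_nonneg_right hA (Nat.cast_nonneg _)
  set T : Finset (Finset (Fin n)) := Finset.univ.filter (fun B => k ≤ B.card) with hT
  have hsub : Finset.univ.filter
        (fun AB : Finset (Fin m) × Finset (Fin n) =>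
          (m : ℝ) / 2 ≤ (AB.1.card : ℝ) ∧ k ≤ AB.2.card) ⊆ Finset.univ ×ˢ T := by
    intro AB hAB
    rw [Finset.mem_filter] at hAB
    exact Finset.mem_product.2 ⟨Finset.mem_univ _,
      Finset.mem_filter.2 ⟨Finset.mem_univ _, hAB.2.2⟩⟩
  calc ∑ AB ∈ Finset.univ.filter
        (fun AB : Finset (Fin m) × Finset (Fin n) =>
          (m : ℝ) / 2 ≤ (AB.1.card : ℝ) ∧ k ≤ AB.2.card),
        q ^ (AB.1.card * AB.2.card)
      ≤ ∑ AB ∈ Finset.univ.filter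
        (fun AB : Finset (Fin m) × Finset (Fin n) =>
          (m : ℝ) / 2 ≤ (AB.1.card : ℝ) ∧ k ≤ AB.2.card),
        (q ^ ((m:ℝ)/2)) ^ AB.2.card := by
        refine Finset.sum_le_sum fun AB hAB => ?_
        rw [Finset.mem_filter] at hAB
        exact hterm AB hAB.2.1
    _ ≤ ∑ AB ∈ Finset.univ ×ˢ T, (q ^ ((m:ℝ)/2)) ^ AB.2.card := by
        refine Finset.sum_le_sum_of_subset_of_nonneg hsub fun AB _ _ => ?_
        positivity
    _ = 2 ^ m * ∑ B ∈ T, (q ^ ((m:ℝ)/2)) ^ B.card := by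
        simp only [Finset.sum_product]
        rw [Finset.sum_const, nsmul_eq_mul, Finset.card_univ, Fintype.card_finset,
          Fintype.card_fin]
        push_cast; ring
    _ ≤ 2 ^ m * (2 * s ^ k) := by
        refine mul_le_mul_of_nonneg_left ?_ (by positivity)
        have e1 : ∑ B ∈ T, (q ^ ((m:ℝ)/2)) ^ B.card
            = ∑ B : Finset (Fin n), (if k ≤ B.card then (q ^ ((m:ℝ)/2)) ^ B.card else 0) := by
          rw [hT, Finset.sum_filter]
        have e2 : ∑ B : Finset (Fin n), (if k ≤ B.card then (q ^ ((m:ℝ)/2)) ^ B.card else 0)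
            = ∑ r ∈ Finset.range (n + 1),
                (n.choose r : ℝ) * (if k ≤ r then (q ^ ((m:ℝ)/2)) ^ r else 0) := by
          have h := Finset.sum_powerset (Finset.univ : Finset (Fin n))
            (fun B => if k ≤ B.card then ((q:ℝ) ^ ((m:ℝ)/2)) ^ B.card else 0)
          rw [Finset.powerset_univ] at h
          rw [h, Finset.card_univ, Fintype.card_fin]
          refine Finset.sum_congr rfl fun r _ => ?_
          have h2 := Finset.sum_powersetCard r (Finset.univ : Finset (Fin n))
            (fun j => if k ≤ j then ((q:ℝ) ^ ((m:ℝ)/2)) ^ j else 0)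
          rw [h2, Finset.card_univ, Fintype.card_fin, nsmul_eq_mul]
        rw [e1, e2]
        calc ∑ r ∈ Finset.range (n + 1),
                (n.choose r : ℝ) * (if k ≤ r then (q ^ ((m:ℝ)/2)) ^ r else 0)
            ≤ ∑ r ∈ Finset.range (n + 1), (if k ≤ r then s ^ r else 0) := by
              refine Finset.sum_le_sum fun r _ => ?_
              by_cases hr : k ≤ r
              · rw [if_pos hr, if_pos hr, hs_def, mul_pow]
                refine mul_le_mul_of_nonneg_right ?_ (by positivity)
                calc (n.choose r : ℝ) ≤ ((n ^ r : ℕ) : ℝ) := by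
                        exact_mod_cast Nat.choose_le_pow n r
                  _ = (n : ℝ) ^ r := by push_cast; ring
              · simp [hr]
          _ ≤ 2 * s ^ k := tail_geom s hs0 hs k (n + 1)

lemma final_bound (q α lam : ℝ) (hq0 : 0 < q) (hq1 : q < 1) (hql : q ^ lam = 1/4)
    (m n k : ℕ) (hlam : 0 < lam) (hkl : lam < (k : ℝ))
    (hn : (n : ℝ) ≤ q ^ (-(α * (m : ℝ)))) :
    (2:ℝ) ^ m * (2 * ((n : ℝ) * q ^ ((m:ℝ)/2)) ^ k)
      ≤ 2 * (n : ℝ) ^ lam * q ^ ((1/2 - α) * ((k:ℝ) - lam) * (m:ℝ)) := by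
  rcases Nat.eq_zero_or_pos n with hn0 | hn0
  · subst hn0
    have hk0 : k ≠ 0 := by
      intro h; rw [h] at hkl; push_cast at hkl; linarith
    rw [Nat.cast_zero, zero_mul, zero_pow hk0, mul_zero, mul_zero]
    positivity
  have hnpos : (0:ℝ) < n := by exact_mod_cast hn0
  have e1 : ((q:ℝ) ^ ((m:ℝ)/2)) ^ k = q ^ ((m:ℝ)/2 * k) := by
    rw [← Real.rpow_natCast (q ^ ((m:ℝ)/2)) k, ← Real.rpow_mul hq0.le]
  have e2 : (n:ℝ) ^ k = (n:ℝ) ^ lam * (n:ℝ) ^ ((k:ℝ) - lam) := by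
    rw [← Real.rpow_natCast (n:ℝ) k, ← Real.rpow_add hnpos]
    congr 1; ring
  have e3 : q ^ (lam * (-(m:ℝ)/2)) = (2:ℝ) ^ m := by
    rw [Real.rpow_mul hq0.le, hql]
    rw [show (-(m:ℝ)/2) = (-(1:ℝ)/2) * m by ring, Real.rpow_mul (by norm_num),
      Real.rpow_natCast]
    congr 1
    rw [show (-(1:ℝ)/2) = -(1/2) by ring, Real.rpow_neg (by norm_num),
      ← Real.sqrt_eq_rpow]
    rw [show (1/4:ℝ) = (1/2)^2 by norm_num, Real.sqrt_sq (by norm_num)]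
    norm_num
  have h1 : (n:ℝ) ^ ((k:ℝ) - lam) ≤ q ^ (-(α * (m:ℝ)) * ((k:ℝ) - lam)) := by
    calc (n:ℝ) ^ ((k:ℝ) - lam) ≤ (q ^ (-(α * (m:ℝ)))) ^ ((k:ℝ) - lam) :=
          Real.rpow_le_rpow (Nat.cast_nonneg n) hn (by linarith)
      _ = q ^ (-(α * (m:ℝ)) * ((k:ℝ) - lam)) := (Real.rpow_mul hq0.le _ _).symm
  have key : (2:ℝ) ^ m * ((n:ℝ) ^ k * ((q:ℝ) ^ ((m:ℝ)/2)) ^ k)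
      ≤ (n:ℝ) ^ lam * q ^ ((1/2 - α) * ((k:ℝ) - lam) * (m:ℝ)) := by
    calc (2:ℝ) ^ m * ((n:ℝ) ^ k * ((q:ℝ) ^ ((m:ℝ)/2)) ^ k)
        = (n:ℝ) ^ lam * ((n:ℝ) ^ ((k:ℝ) - lam)
            * q ^ (lam * (-(m:ℝ)/2) + (m:ℝ)/2 * k)) := by
          rw [← e3, e1, e2, Real.rpow_add hq0]; ring
      _ ≤ (n:ℝ) ^ lam * (q ^ (-(α * (m:ℝ)) * ((k:ℝ) - lam))
            * q ^ (lam * (-(m:ℝ)/2) + (m:ℝ)/2 * k)) := by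
          refine mul_le_mul_of_nonneg_left
            (mul_le_mul_of_nonneg_right h1 (Real.rpow_nonneg hq0.le _))
            (Real.rpow_nonneg (Nat.cast_nonneg n) _)
      _ = (n:ℝ) ^ lam * q ^ ((1/2 - α) * ((k:ℝ) - lam) * (m:ℝ)) := by
          rw [← Real.rpow_add hq0]; congr 1; ring
  calc (2:ℝ) ^ m * (2 * ((n : ℝ) * q ^ ((m:ℝ)/2)) ^ k)
      = 2 * ((2:ℝ) ^ m * ((n:ℝ) ^ k * ((q:ℝ) ^ ((m:ℝ)/2)) ^ k)) := by
        rw [mul_pow]; ring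
    _ ≤ 2 * ((n:ℝ) ^ lam * q ^ ((1/2 - α) * ((k:ℝ) - lam) * (m:ℝ))) := by linarith
    _ = 2 * (n : ℝ) ^ lam * q ^ ((1/2 - α) * ((k:ℝ) - lam) * (m:ℝ)) := by ring

set_option maxHeartbeats 1000000 in
theorem stmt_16 (p q α : ℝ) (hq : q = 1 - p) (hq0 : 0 < q) (hq1 : q < 1) (hα : α < 1/2) :
    0 < (1/2 - α) * ((⌊Real.log (1/4) / Real.log q⌋ : ℝ) + 1 - Real.log (1/4) / Real.log q) ∧
    ∃ M : ℕ, ∀ m : ℕ, M ≤ m → ∀ n : ℕ, (n : ℝ) ≤ q ^ (-(α * (m : ℝ))) →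
      (∑ g : Fin m × Fin n → Bool, bipWeight m n p g *
          ((Finset.univ.filter (fun AB : Finset (Fin m) × Finset (Fin n) =>
              (m : ℝ) / 2 ≤ (AB.1.card : ℝ) ∧
              ⌊Real.log (1/4) / Real.log q⌋ + 1 ≤ (AB.2.card : ℤ) ∧
              ∀ a ∈ AB.1, ∀ b ∈ AB.2, ¬ (g (a, b) = true))).card : ℝ))
        ≤ 2 * (n : ℝ) ^ (Real.log (1/4) / Real.log q) *
            q ^ ((1/2 - α) *
              ((⌊Real.log (1/4) / Real.log q⌋ : ℝ) + 1 - Real.log (1/4) / Real.log q)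
              * (m : ℝ)) := by
  classical
  set lam : ℝ := Real.log (1/4) / Real.log q with hlam_def
  have hlogq : Real.log q < 0 := Real.log_neg hq0 hq1
  have hlog4 : Real.log ((1:ℝ)/4) < 0 := Real.log_neg (by norm_num) (by norm_num)
  have hlam : 0 < lam := div_pos_of_neg_of_neg hlog4 hlogq
  have hql : q ^ lam = 1/4 := by
    have hmul : Real.log q * lam = Real.log (1/4) := by
      rw [hlam_def, mul_comm]
      exact div_mul_cancel₀ _ hlogq.ne
    rw [Real.rpow_def_of_pos hq0, hmul, Real.exp_log (by norm_num)]
  have hfl : (0:ℤ) ≤ ⌊lam⌋ := Int.floor_nonneg.2 hlam.le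
  set k : ℕ := ⌊lam⌋.toNat + 1 with hk_def
  have hkZ : (k:ℤ) = ⌊lam⌋ + 1 := by
    rw [hk_def]; push_cast [Int.toNat_of_nonneg hfl]; ring
  have hkR : (k:ℝ) = (⌊lam⌋:ℝ) + 1 := by exact_mod_cast congrArg (fun z : ℤ => (z : ℝ)) hkZ
  have hkl : lam < (k:ℝ) := by rw [hkR]; exact Int.lt_floor_add_one lam
  have hfloor1 : lam < (⌊lam⌋:ℝ) + 1 := Int.lt_floor_add_one lam
  refine ⟨mul_pos (by linarith) (by linarith), ?_⟩
  set c0 : ℝ := q ^ ((1:ℝ)/2 - α) with hc0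
  have hc0pos : 0 < c0 := Real.rpow_pos_of_pos hq0 _
  have hc0lt : c0 < 1 := Real.rpow_lt_one hq0.le hq1 (by linarith)
  obtain ⟨M, hM⟩ := exists_pow_lt_of_lt_one (show (0:ℝ) < 1/2 by norm_num) hc0lt
  refine ⟨M, fun m hm n hn => ?_⟩
  have hs : (n:ℝ) * q ^ ((m:ℝ)/2) ≤ 1/2 := by
    have h1 : (n:ℝ) * q ^ ((m:ℝ)/2) ≤ q ^ (-(α*(m:ℝ))) * q ^ ((m:ℝ)/2) :=
      mul_le_mul_of_nonneg_right hn (Real.rpow_nonneg hq0.le _)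
    have h2 : q ^ (-(α*(m:ℝ))) * q ^ ((m:ℝ)/2) = c0 ^ m := by
      rw [← Real.rpow_add hq0, hc0, ← Real.rpow_natCast (q ^ ((1:ℝ)/2 - α)) m,
        ← Real.rpow_mul hq0.le]
      congr 1; ring
    have h3 : c0 ^ m ≤ c0 ^ M := pow_le_pow_of_le_one hc0pos.le hc0lt.le hm
    linarith
  have hfe : (Finset.univ.filter (fun AB : Finset (Fin m) × Finset (Fin n) =>
        (m : ℝ) / 2 ≤ (AB.1.card : ℝ) ∧ ⌊lam⌋ + 1 ≤ (AB.2.card : ℤ)))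
      = Finset.univ.filter (fun AB : Finset (Fin m) × Finset (Fin n) =>
        (m : ℝ) / 2 ≤ (AB.1.card : ℝ) ∧ k ≤ AB.2.card) := by
    refine Finset.filter_congr fun AB _ => ?_
    have hiff : (⌊lam⌋ + 1 ≤ (AB.2.card : ℤ)) ↔ k ≤ AB.2.card := by omega
    rw [hiff]
  calc (∑ g : Fin m × Fin n → Bool, bipWeight m n p g *
          ((Finset.univ.filter (fun AB : Finset (Fin m) × Finset (Fin n) =>
              (m : ℝ) / 2 ≤ (AB.1.card : ℝ) ∧
              ⌊lam⌋ + 1 ≤ (AB.2.card : ℤ) ∧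
              ∀ a ∈ AB.1, ∀ b ∈ AB.2, ¬ (g (a, b) = true))).card : ℝ))
      = ∑ AB ∈ Finset.univ.filter
          (fun AB : Finset (Fin m) × Finset (Fin n) =>
            (m : ℝ) / 2 ≤ (AB.1.card : ℝ) ∧ ⌊lam⌋ + 1 ≤ (AB.2.card : ℤ)),
          q ^ (AB.1.card * AB.2.card) := by
        have h := step1 m n p q hq (fun A => (m : ℝ) / 2 ≤ (A.card : ℝ))
          (fun B => ⌊lam⌋ + 1 ≤ (B.card : ℤ))
        convert h using 3 with g
        exact congrArg (fun t : Finset (Finset (Fin m) × Finset (Fin n)) => ((t.card : ℕ) : ℝ))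
          (Finset.ext fun AB => by simp only [Finset.mem_filter])
    _ = ∑ AB ∈ Finset.univ.filter
          (fun AB : Finset (Fin m) × Finset (Fin n) =>
            (m : ℝ) / 2 ≤ (AB.1.card : ℝ) ∧ k ≤ AB.2.card),
          q ^ (AB.1.card * AB.2.card) := by rw [hfe]
    _ ≤ 2 ^ m * (2 * ((n : ℝ) * q ^ ((m:ℝ)/2)) ^ k) := count_bound m n k q hq0 hq1 hs
    _ ≤ 2 * (n : ℝ) ^ lam * q ^ ((1/2 - α) * ((k:ℝ) - lam) * (m:ℝ)) :=
        final_bound q α lam hq0 hq1 hql m n k hlam hkl hn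
    _ = 2 * (n : ℝ) ^ lam * q ^ ((1/2 - α) * (((⌊lam⌋:ℝ) + 1) - lam) * (m:ℝ)) := by
        rw [hkR]
    _ = 2 * (n : ℝ) ^ lam * q ^ ((1/2 - α) * ((⌊lam⌋:ℝ) + 1 - lam) * (m:ℝ)) := rfl
end
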